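/- arXiv:1301.1404 — 8 statements merged into one kernel-verified Lean document; each statement's English description precedes it below -/
import Mathlib

section
/- Given two short exact sequences of groups 0 → A₀ → B₀ → G₀ → 0 and 0 → A → B → G → 0, with homomorphisms α : A₀ → A surjective, β : B₀ → B, γ : G₀ → G injective with normal image, making the diagram commute, and with the image of A₀ contained in the center of B₀, let Π₀ = G/γ(G₀), E₀ = B₀/ker(α), σ : G → Π₀ the natural projection, and p : B → G the projection of the second sequence. Then the sequence B₀ → B → Π₀ → 1 (with maps β and σ∘p) is exact, i.e., the image of β equals the kernel of σ∘p and σ∘p is surjective. -/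
/-- For an (α,γ)-prolongation diagram, the sequence
`B₀ →^β B →^{σ∘p} Π₀ → 1` is exact: `im β = ker (σ∘p)` and `σ∘p` is surjective. -/
theorem stmt0 {A₀ B₀ G₀ A B G : Type*} [Group A₀] [Group B₀] [Group G₀]
    [Group A] [Group B] [Group G]
    (j₀ : A₀ →* B₀) (p₀ : B₀ →* G₀) (j : A →* B) (p : B →* G)
    (α : A₀ →* A) (β : B₀ →* B) (γ : G₀ →* G)
    (hj₀ : Function.Injective j₀) (hp₀ : Function.Surjective p₀)
    (hex₀ : j₀.range = p₀.ker)
    (hj : Function.Injective j) (hp : Function.Surjective p)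
    (hex : j.range = p.ker)
    (hα : Function.Surjective α) (hγ : Function.Injective γ)
    [hN : γ.range.Normal]
    (hβj : β.comp j₀ = j.comp α) (hpβ : p.comp β = γ.comp p₀)
    (hcent : j₀.range ≤ Subgroup.center B₀) :
    ((QuotientGroup.mk' γ.range).comp p).ker = β.range ∧
      Function.Surjective ((QuotientGroup.mk' γ.range).comp p) := by
  constructor
  · ext x
    simp only [MonoidHom.mem_ker, MonoidHom.comp_apply, QuotientGroup.mk'_apply,
      QuotientGroup.eq_one_iff]
    constructor
    · rintro ⟨g₀, hg₀⟩
      obtain ⟨b₀, hb₀⟩ := hp₀ g₀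
      have hpb : p (β b₀) = p x := by
        have := congrArg (fun f => f b₀) hpβ
        simp only [MonoidHom.comp_apply] at this
        rw [this, hb₀, hg₀]
      have : x * (β b₀)⁻¹ ∈ p.ker := by
        simp [MonoidHom.mem_ker, hpb]
      rw [← hex] at this
      obtain ⟨a, ha⟩ := this
      obtain ⟨a₀, ha₀⟩ := hα a
      refine ⟨j₀ a₀ * b₀, ?_⟩
      have hβa : β (j₀ a₀) = j a := by
        have := congrArg (fun f => f a₀) hβj
        simp only [MonoidHom.comp_apply] at this
        rw [this, ha₀]
      rw [map_mul, hβa, ha]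
      group
    · rintro ⟨b₀, rfl⟩
      exact ⟨p₀ b₀, (congrArg (fun f => f b₀) hpβ).symm⟩
  · exact (QuotientGroup.mk'_surjective _).comp hp
end

section
/- Any (α,γ)-prolongation of a central extension E₀ induces a homomorphism θ : G → Aut(E₀) (where E₀ = B₀/ker α) such that (E₀, G, γ∘π, θ) is a crossed module; that is: (C1) θ_{γπ(e₀)} is conjugation by e₀ in E₀ for all e₀ ∈ E₀, and (C2) γπ(θ_g(e₀)) = g · γπ(e₀) · g⁻¹ for all g ∈ G, e₀ ∈ E₀. -/
/-- Any (α,γ)-prolongation of a central extension induces a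
homomorphism θ : G → Aut(E₀), θ_g = φ_b for p(b) = g, such that
(E₀, G, γ∘π, θ) is a crossed module: (C1) θ_{γπ(e₀)} is conjugation by e₀ and
(C2) γπ(θ_g e₀) = g · γπ(e₀) · g⁻¹. -/
theorem stmt6 {A₀ B₀ G₀ A B G : Type*} [Group A₀] [Group B₀] [Group G₀]
    [Group A] [Group B] [Group G]
    (j₀ : A₀ →* B₀) (p₀ : B₀ →* G₀) (j : A →* B) (p : B →* G)
    (α : A₀ →* A) (β : B₀ →* B) (γ : G₀ →* G)
    (hj₀ : Function.Injective j₀) (hp₀ : Function.Surjective p₀)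
    (hex₀ : j₀.range = p₀.ker)
    (hj : Function.Injective j) (hp : Function.Surjective p)
    (hex : j.range = p.ker)
    (hα : Function.Surjective α) (hγ : Function.Injective γ)
    [hN : γ.range.Normal] [hNα : (Subgroup.map j₀ α.ker).Normal]
    (hβj : β.comp j₀ = j.comp α) (hpβ : p.comp β = γ.comp p₀)
    (hcent : j₀.range ≤ Subgroup.center B₀)
    -- the induced maps π and ε of E₀ = B₀/ker α
    (π : (B₀ ⧸ Subgroup.map j₀ α.ker) →* G₀)
    (hπ : ∀ b₀ : B₀, π (QuotientGroup.mk b₀) = p₀ b₀)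
    (ε : (B₀ ⧸ Subgroup.map j₀ α.ker) →* B)
    (hεdef : ∀ b₀ : B₀, ε (QuotientGroup.mk b₀) = β b₀) :
    ∃ θ : G →* MulAut (B₀ ⧸ Subgroup.map j₀ α.ker),
      (∀ (b : B) (e₀ : B₀ ⧸ Subgroup.map j₀ α.ker),
        ε (θ (p b) e₀) = b * ε e₀ * b⁻¹) ∧
      (∀ e₀ e' : B₀ ⧸ Subgroup.map j₀ α.ker, θ (γ (π e₀)) e' = e₀ * e' * e₀⁻¹) ∧
      (∀ (g : G) (e₀ : B₀ ⧸ Subgroup.map j₀ α.ker),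
        γ (π (θ g e₀)) = g * γ (π e₀) * g⁻¹) := by
  have hpβ' : ∀ b₀ : B₀, p (β b₀) = γ (p₀ b₀) := fun b₀ => DFunLike.congr_fun hpβ b₀
  have hβj' : ∀ a₀ : A₀, β (j₀ a₀) = j (α a₀) := fun a₀ => DFunLike.congr_fun hβj a₀
  -- ε is injective
  have hεinj : Function.Injective ε := by
    rw [injective_iff_map_eq_one]
    intro e he
    refine QuotientGroup.induction_on e ?_ he
    intro b₀ he
    rw [hεdef] at he
    have h2 : p₀ b₀ = 1 := hγ (by rw [← hpβ', he, map_one, map_one])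
    obtain ⟨a₀, ha₀⟩ : b₀ ∈ j₀.range := by rw [hex₀]; exact h2
    have hαa : α a₀ = 1 := hj (by rw [← hβj', ha₀, he, map_one])
    rw [QuotientGroup.eq_one_iff]
    exact ⟨a₀, hαa, ha₀⟩
  -- p ∘ ε = γ ∘ π
  have hpε : ∀ e, p (ε e) = γ (π e) := by
    intro e
    refine QuotientGroup.induction_on e ?_
    intro b₀
    rw [hεdef, hπ, hpβ']
  -- elements of B landing in γ.range under p are in the range of ε
  have hmem : ∀ y : B, p y ∈ γ.range → ∃ e, ε e = y := by
    rintro y ⟨g₀, hg₀⟩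
    obtain ⟨b₀, hb₀⟩ := hp₀ g₀
    have hk : y * (β b₀)⁻¹ ∈ j.range := by
      rw [hex]
      have : p (y * (β b₀)⁻¹) = 1 := by
        rw [map_mul, map_inv, hpβ', hb₀, hg₀, mul_inv_cancel]
      exact this
    obtain ⟨a, ha⟩ := hk
    obtain ⟨a₀, ha₀⟩ := hα a
    refine ⟨QuotientGroup.mk (j₀ a₀ * b₀), ?_⟩
    rw [hεdef, map_mul, hβj', ha₀, ha]
    group
  -- existence of conjugates inside the range of ε
  have hconj : ∀ (b : B) (e₀ : B₀ ⧸ Subgroup.map j₀ α.ker), ∃ e, ε e = b * ε e₀ * b⁻¹ := by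
    intro b e₀
    apply hmem
    rw [map_mul, map_mul, map_inv, hpε]
    exact hN.conj_mem _ ⟨π e₀, rfl⟩ (p b)
  choose f hf using hconj
  -- kernel elements commute with the range of ε
  have hcomm : ∀ c : B, p c = 1 → ∀ e, c * ε e = ε e * c := by
    intro c hc e
    obtain ⟨a, ha⟩ : c ∈ j.range := by rw [hex]; exact hc
    obtain ⟨a₀, ha₀⟩ := hα a
    refine QuotientGroup.induction_on e ?_
    intro b₀
    rw [hεdef, ← ha, ← ha₀, ← hβj', ← map_mul, ← map_mul]
    congr 1
    exact (Subgroup.mem_center_iff.mp (hcent ⟨a₀, rfl⟩) b₀).symm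
  -- conjugation depends only on the image under p
  have hconj_eq : ∀ b b' : B, p b = p b' → ∀ e, b * ε e * b⁻¹ = b' * ε e * b'⁻¹ := by
    intro b b' hbb' e
    have hc : p (b'⁻¹ * b) = 1 := by rw [map_mul, map_inv, hbb', inv_mul_cancel]
    have h := hcomm _ hc e
    calc b * ε e * b⁻¹ = b' * ((b'⁻¹ * b) * ε e) * b⁻¹ := by group
      _ = b' * (ε e * (b'⁻¹ * b)) * b⁻¹ := by rw [h]
      _ = b' * ε e * b'⁻¹ := by group
  have hfp : ∀ b b' : B, p b = p b' → ∀ e, f b e = f b' e := by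
    intro b b' hbb' e
    exact hεinj (by rw [hf, hf, hconj_eq b b' hbb'])
  have hfmul : ∀ b e e', f b (e * e') = f b e * f b e' := by
    intro b e e'
    refine hεinj ?_
    rw [hf, map_mul, map_mul, hf, hf]
    group
  have hfinv : ∀ b e, f b⁻¹ (f b e) = e := by
    intro b e
    refine hεinj ?_
    rw [hf, hf]
    group
  have hfinv' : ∀ b e, f b (f b⁻¹ e) = e := by
    intro b e
    refine hεinj ?_
    rw [hf, hf]
    group
  have hfcomp : ∀ (b b' : B) e, f (b * b') e = f b (f b' e) := by
    intro b b' e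
    refine hεinj ?_
    rw [hf, hf, hf]
    group
  let Φ : B → MulAut (B₀ ⧸ Subgroup.map j₀ α.ker) := fun b =>
    { toFun := f b
      invFun := f b⁻¹
      left_inv := hfinv b
      right_inv := hfinv' b
      map_mul' := hfmul b }
  have hΦ : ∀ (b : B) e, Φ b e = f b e := fun _ _ => rfl
  obtain ⟨c, hc⟩ : ∃ c : G → B, ∀ g, p (c g) = g := ⟨fun g => (hp g).choose, fun g => (hp g).choose_spec⟩
  refine ⟨MonoidHom.mk' (fun g => Φ (c g)) ?_, ?_, ?_, ?_⟩
  · intro g₁ g₂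
    refine MulEquiv.ext fun e => ?_
    rw [MulAut.mul_apply, hΦ, hΦ, hΦ, ← hfcomp]
    refine hfp _ _ ?_ e
    rw [hc, map_mul, hc, hc]
  · intro b e₀
    show ε (f (c (p b)) e₀) = b * ε e₀ * b⁻¹
    rw [hf]
    exact hconj_eq _ _ (hc (p b)) e₀
  · intro e₀ e'
    show f (c (γ (π e₀))) e' = e₀ * e' * e₀⁻¹
    refine hεinj ?_
    rw [hf, map_mul, map_mul, map_inv]
    refine hconj_eq _ _ ?_ e'
    rw [hc, hpε]
  · intro g e₀
    show γ (π (f (c g) e₀)) = g * γ (π e₀) * g⁻¹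
    rw [← hpε, hf, map_mul, map_mul, map_inv, hc, hpε]
end

section
/- In the setting above, the function k : Π₀³ → A defined by φ(x)(h(y,z)) · h(x,yz) = h(x,y) · h(xy,z) · k(x,y,z) is a 3-cocycle of Π₀ with coefficients in the Π₀-module A (with A central in E₀ and the Π₀-action induced by θ via x·a = θ_{u_x}(a) for a ∈ A ⊆ E₀). -/
/-- The function k : Π₀³ → A defined by
θ_{u_x}(h(y,z)) · h(x,yz) = h(x,y) · h(xy,z) · k(x,y,z) is a 3-cocycle of Π₀ with
coefficients in the Π₀-module A = ker d ⊆ Z(E₀) (action x·a = θ_{u_x}(a)):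
x·k(y,z,w) · k(x,yz,w) · k(x,y,z) = k(xy,z,w) · k(x,y,zw). -/
theorem stmt11 {E₀ G : Type*} [Group E₀] [Group G]
    (d : E₀ →* G) (θ : G →* MulAut E₀)
    (hC1 : ∀ e e' : E₀, θ (d e) e' = e * e' * e⁻¹)
    (hC2 : ∀ (g : G) (e : E₀), d (θ g e) = g * d e * g⁻¹)
    (hcent : d.ker ≤ Subgroup.center E₀)
    [hN : d.range.Normal]
    (u : (G ⧸ d.range) → G)
    (hu : ∀ x, QuotientGroup.mk' d.range (u x) = x) (hu1 : u 1 = 1)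
    (h : (G ⧸ d.range) → (G ⧸ d.range) → E₀)
    (hh : ∀ x y, d (h x y) = u x * u y * (u (x * y))⁻¹)
    (hhx1 : ∀ x, h x 1 = 1) (hh1y : ∀ y, h 1 y = 1)
    (k : (G ⧸ d.range) → (G ⧸ d.range) → (G ⧸ d.range) → E₀)
    (hk : ∀ x y z, θ (u x) (h y z) * h x (y * z) = h x y * h (x * y) z * k x y z) :
    (∀ x y z, k x y z ∈ d.ker) ∧
      (∀ x y z w, θ (u x) (k y z w) * k x (y * z) w * k x y z
        = k (x * y) z w * k x y (z * w)) := by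
  have hker : ∀ x y z, k x y z ∈ d.ker := by
    intro x y z
    have e := congrArg d (hk x y z)
    simp only [map_mul, hC2, hh, mul_assoc x y z] at e
    rw [MonoidHom.mem_ker]
    have e2 : u x * u y * u z * (u (x*(y*z)))⁻¹ * d (k x y z)
        = u x * u y * u z * (u (x*(y*z)))⁻¹ * 1 := by
      rw [mul_one]
      calc u x * u y * u z * (u (x*(y*z)))⁻¹ * d (k x y z)
          = u x * u y * (u (x * y))⁻¹ * (u (x * y) * u z * (u (x * (y * z)))⁻¹) * d (k x y z) := by
            group
        _ = u x * (u y * u z * (u (y * z))⁻¹) * (u x)⁻¹ * (u x * u (y * z) * (u (x * (y * z)))⁻¹) :=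
            e.symm
        _ = u x * u y * u z * (u (x*(y*z)))⁻¹ := by group
    exact mul_left_cancel e2
  have cen : ∀ a : E₀, a ∈ d.ker → ∀ b : E₀, b * a = a * b := fun a ha b =>
    Subgroup.mem_center_iff.mp (hcent ha) b
  refine ⟨hker, ?_⟩
  intro x y z w
  have hθker : θ (u x) (k y z w) ∈ d.ker := by
    rw [MonoidHom.mem_ker, hC2, MonoidHom.mem_ker.mp (hker y z w)]
    group
  have cK := cen _ hθker
  have c1 := cen _ (hker x y z)
  have c2 := cen _ (hker x (y*z) w)
  have hconj : ∀ (a b : G ⧸ d.range) (e : E₀),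
      θ (u a) (θ (u b) e) = h a b * θ (u (a*b)) e * (h a b)⁻¹ := by
    intro a b e
    have huu : u a * u b = d (h a b) * u (a*b) := by rw [hh]; group
    calc θ (u a) (θ (u b) e) = θ (u a * u b) e := by rw [map_mul]; rfl
      _ = θ (d (h a b) * u (a*b)) e := by rw [huu]
      _ = θ (d (h a b)) (θ (u (a*b)) e) := by rw [map_mul]; rfl
      _ = _ := hC1 _ _
  have E2 : θ (u x) (θ (u y) (h z w)) * θ (u x) (h y (z*w))
      = θ (u x) (h y z) * θ (u x) (h (y*z) w) * θ (u x) (k y z w) := by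
    have := congrArg (θ (u x)) (hk y z w)
    simpa [map_mul] using this
  set T := θ (u x) (θ (u y) (h z w)) * θ (u x) (h y (z*w)) * h x (y*(z*w)) with hT
  have eqA : T = h x y * h (x*y) z * h (x*y*z) w
      * (θ (u x) (k y z w) * k x (y*z) w * k x y z) := by
    calc T = (θ (u x) (θ (u y) (h z w)) * θ (u x) (h y (z*w))) * h x (y*(z*w)) := rfl
      _ = (θ (u x) (h y z) * θ (u x) (h (y*z) w) * θ (u x) (k y z w)) * h x (y*(z*w)) := by
          rw [E2]
      _ = θ (u x) (h y z) * θ (u x) (h (y*z) w) * (θ (u x) (k y z w) * h x (y*(z*w))) := by group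
      _ = θ (u x) (h y z) * θ (u x) (h (y*z) w) * (h x (y*(z*w)) * θ (u x) (k y z w)) := by
          rw [cK]
      _ = θ (u x) (h y z) * (θ (u x) (h (y*z) w) * h x ((y*z)*w)) * θ (u x) (k y z w) := by
          rw [← mul_assoc y z w]; group
      _ = θ (u x) (h y z) * (h x (y*z) * h (x*(y*z)) w * k x (y*z) w) * θ (u x) (k y z w) := by
          rw [hk x (y*z) w]
      _ = (θ (u x) (h y z) * h x (y*z)) * h (x*(y*z)) w * (k x (y*z) w * θ (u x) (k y z w)) := by
          group
      _ = (h x y * h (x*y) z * k x y z) * h (x*(y*z)) w * (k x (y*z) w * θ (u x) (k y z w)) := by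
          rw [hk x y z]
      _ = h x y * h (x*y) z * (k x y z * h (x*(y*z)) w) * (k x (y*z) w * θ (u x) (k y z w)) := by
          group
      _ = h x y * h (x*y) z * (h (x*(y*z)) w * k x y z) * (k x (y*z) w * θ (u x) (k y z w)) := by
          rw [c1]
      _ = h x y * h (x*y) z * h (x*(y*z)) w * (k x y z * (k x (y*z) w * θ (u x) (k y z w))) := by
          group
      _ = h x y * h (x*y) z * h (x*(y*z)) w * ((k x (y*z) w * θ (u x) (k y z w)) * k x y z) := by
          rw [c1]
      _ = h x y * h (x*y) z * h (x*(y*z)) w * (k x (y*z) w * (θ (u x) (k y z w)) * k x y z) := by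
          group
      _ = h x y * h (x*y) z * h (x*(y*z)) w * ((θ (u x) (k y z w)) * k x (y*z) w * k x y z) := by
          rw [cK]
      _ = h x y * h (x*y) z * h (x*y*z) w * (θ (u x) (k y z w) * k x (y*z) w * k x y z) := by
          rw [mul_assoc x y z]
  have eqB : T = h x y * h (x*y) z * h (x*y*z) w * (k (x*y) z w * k x y (z*w)) := by
    calc T = (h x y * θ (u (x*y)) (h z w) * (h x y)⁻¹) * θ (u x) (h y (z*w)) * h x (y*(z*w)) := by
          rw [hT, hconj]
      _ = h x y * θ (u (x*y)) (h z w) * (h x y)⁻¹ * (θ (u x) (h y (z*w)) * h x (y*(z*w))) := by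
          group
      _ = h x y * θ (u (x*y)) (h z w) * (h x y)⁻¹ * (h x y * h (x*y) (z*w) * k x y (z*w)) := by
          rw [hk x y (z*w)]
      _ = h x y * (θ (u (x*y)) (h z w) * h (x*y) (z*w)) * k x y (z*w) := by group
      _ = h x y * (h (x*y) z * h ((x*y)*z) w * k (x*y) z w) * k x y (z*w) := by
          rw [hk (x*y) z w]
      _ = h x y * h (x*y) z * h (x*y*z) w * (k (x*y) z w * k x y (z*w)) := by group
  exact mul_left_cancel (eqA.symm.trans eqB)
end

section
/- With u fixed, if h' : Π₀² → E₀ is another normalized lift of f along d (i.e. d∘h' = f, h'(x,1)=h'(1,y)=1), then h' = h·l for a normalized function l : Π₀² → A, and the corresponding 3-cocycle k' differs from k by the coboundary δl: k' = k · δl. Hence the cohomology class [k] ∈ H³(Π₀, A) is independent of the choice of h, and any cocycle cohomologous to k arises from some choice of h. -/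
lemma aux12 {E : Type*} [Group E] (a b c e P Q R S T : E)
    (ha : ∀ x, a * x = x * a) (hb : ∀ x, b * x = x * b)
    (hc : ∀ x, c * x = x * c) (he : ∀ x, e * x = x * e)
    (hPQ : P * Q = R * S * T) :
    (P * a) * (Q * b) = (R * c) * (S * e) * (T * (a * b * e⁻¹ * c⁻¹)) := by
  have h1 : (P * a) * (Q * b) = (P * Q) * (a * b) := by
    rw [mul_assoc, ← mul_assoc a Q b, ha Q, mul_assoc Q a b, ← mul_assoc]
  have h2 : (R * c) * (S * e) = (R * S) * (c * e) := by
    rw [mul_assoc, ← mul_assoc c S e, hc S, mul_assoc S c e, ← mul_assoc]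
  rw [h1, hPQ, h2]
  have hce : c⁻¹ * e = e * c⁻¹ := (Commute.inv_left (hc e : Commute c e)).eq
  have inner : c * (e * (a * b * e⁻¹ * c⁻¹)) = a * b := by
    rw [hc (e * (a * b * e⁻¹ * c⁻¹)), he (a * b * e⁻¹ * c⁻¹),
      mul_assoc (a * b * e⁻¹) c⁻¹ e, hce]
    group
  calc R * S * T * (a * b)
      = R * S * (T * (c * (e * (a * b * e⁻¹ * c⁻¹)))) := by rw [inner, mul_assoc]
    _ = R * S * (c * e) * (T * (a * b * e⁻¹ * c⁻¹)) := by
        have hceT : (c * e) * T = T * (c * e) := by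
          rw [mul_assoc, he T, ← mul_assoc, hc T, mul_assoc]
        rw [← mul_assoc c e, ← mul_assoc T (c*e), ← hceT]
        simp only [mul_assoc]



/-- With the section u fixed, a change of the normalized lift h of f
replaces the obstruction cocycle k by a cohomologous one (k' = k · δl), and
conversely every cocycle cohomologous to k arises from a suitable change of h. -/
theorem stmt12 {E₀ G : Type*} [Group E₀] [Group G]
    (d : E₀ →* G) (θ : G →* MulAut E₀)
    (hC1 : ∀ e e' : E₀, θ (d e) e' = e * e' * e⁻¹)
    (hC2 : ∀ (g : G) (e : E₀), d (θ g e) = g * d e * g⁻¹)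
    (hcent : d.ker ≤ Subgroup.center E₀)
    [hN : d.range.Normal]
    (u : (G ⧸ d.range) → G)
    (hu : ∀ x, QuotientGroup.mk' d.range (u x) = x) (hu1 : u 1 = 1)
    -- the normalized lift h of f and its obstruction cocycle k
    (h : (G ⧸ d.range) → (G ⧸ d.range) → E₀)
    (hh : ∀ x y, d (h x y) = u x * u y * (u (x * y))⁻¹)
    (hhx1 : ∀ x, h x 1 = 1) (hh1y : ∀ y, h 1 y = 1)
    (k : (G ⧸ d.range) → (G ⧸ d.range) → (G ⧸ d.range) → E₀)
    (hk : ∀ x y z, θ (u x) (h y z) * h x (y * z) = h x y * h (x * y) z * k x y z)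
    -- another normalized lift h' of f and its obstruction cocycle k'
    (h' : (G ⧸ d.range) → (G ⧸ d.range) → E₀)
    (hh' : ∀ x y, d (h' x y) = u x * u y * (u (x * y))⁻¹)
    (hh'x1 : ∀ x, h' x 1 = 1) (hh'1y : ∀ y, h' 1 y = 1)
    (k' : (G ⧸ d.range) → (G ⧸ d.range) → (G ⧸ d.range) → E₀)
    (hk' : ∀ x y z,
      θ (u x) (h' y z) * h' x (y * z) = h' x y * h' (x * y) z * k' x y z) :
    -- (1) k' is cohomologous to k: h' = h·l for a normalized l with values in
    -- A = ker d, and k' = k · δl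
    (∃ l : (G ⧸ d.range) → (G ⧸ d.range) → E₀,
      (∀ x y, l x y ∈ d.ker) ∧ (∀ x, l x 1 = 1) ∧ (∀ y, l 1 y = 1) ∧
      (∀ x y, h' x y = h x y * l x y) ∧
      (∀ x y z, k' x y z =
        k x y z * (θ (u x) (l y z) * l x (y * z) * (l (x * y) z)⁻¹ * (l x y)⁻¹))) ∧
    -- (2) conversely, any cocycle cohomologous to k arises from some change of h:
    -- for any normalized l with values in A, h·l is a normalized lift of f whose
    -- obstruction is k · δl
    (∀ l : (G ⧸ d.range) → (G ⧸ d.range) → E₀,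
      (∀ x y, l x y ∈ d.ker) → (∀ x, l x 1 = 1) → (∀ y, l 1 y = 1) →
      (∀ x y, d (h x y * l x y) = u x * u y * (u (x * y))⁻¹) ∧
      (∀ x, h x 1 * l x 1 = 1) ∧ (∀ y, h 1 y * l 1 y = 1) ∧
      (∀ x y z, θ (u x) (h y z * l y z) * (h x (y * z) * l x (y * z)) =
        (h x y * l x y) * (h (x * y) z * l (x * y) z) *
          (k x y z * (θ (u x) (l y z) * l x (y * z) * (l (x * y) z)⁻¹ * (l x y)⁻¹)))) := by

  have hcen : ∀ w ∈ d.ker, ∀ x : E₀, w * x = x * w := fun w hw x =>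
    ((Subgroup.mem_center_iff.mp (hcent hw)) x).symm
  have hθker : ∀ (g : G) (w : E₀), w ∈ d.ker → θ g w ∈ d.ker := by
    intro g w hw
    rw [MonoidHom.mem_ker] at hw ⊢
    rw [hC2, hw, mul_one, mul_inv_cancel]
  -- the generic cocycle computation
  have main : ∀ l : (G ⧸ d.range) → (G ⧸ d.range) → E₀,
      (∀ x y, l x y ∈ d.ker) →
      (∀ x y z, θ (u x) (h y z * l y z) * (h x (y * z) * l x (y * z)) =
        (h x y * l x y) * (h (x * y) z * l (x * y) z) *
          (k x y z * (θ (u x) (l y z) * l x (y * z) * (l (x * y) z)⁻¹ * (l x y)⁻¹))) := by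
    intro l hl x y z
    rw [map_mul]
    exact aux12 (θ (u x) (l y z)) (l x (y * z)) (l x y) (l (x * y) z) _ _ _ _ _
      (hcen _ (hθker _ _ (hl y z))) (hcen _ (hl x (y * z)))
      (hcen _ (hl x y)) (hcen _ (hl (x * y) z)) (hk x y z)
  constructor
  · -- part (1)
    refine ⟨fun x y => (h x y)⁻¹ * h' x y, ?_, ?_, ?_, ?_, ?_⟩
    · intro x y
      rw [MonoidHom.mem_ker, map_mul, map_inv, hh, hh']
      group
    · intro x; simp [hhx1, hh'x1]
    · intro y; simp [hh1y, hh'1y]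
    · intro x y; simp
    · intro x y z
      set l : (G ⧸ d.range) → (G ⧸ d.range) → E₀ := fun x y => (h x y)⁻¹ * h' x y with hldef
      have hlk : ∀ x y, l x y ∈ d.ker := by
        intro x y
        rw [MonoidHom.mem_ker, map_mul, map_inv, hh, hh']
        group
      have hrepl : ∀ x y, h' x y = h x y * l x y := by intro x y; simp [hldef]
      have := main l hlk x y z
      rw [← hrepl, ← hrepl, ← hrepl, ← hrepl, hk' x y z] at this
      exact mul_left_cancel this
  · -- part (2)
    intro l hl hl1 h1l
    refine ⟨?_, ?_, ?_, main l hl⟩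
    · intro x y
      have := hl x y
      rw [MonoidHom.mem_ker] at this
      rw [map_mul, this, mul_one, hh]
    · intro x; rw [hhx1, hl1, one_mul]
    · intro y; rw [hh1y, h1l, one_mul]
end

section
/- With h fixed relative to a section u, if u' is another normalized section of σ : G → Π₀ (so u'_x = g_x u_x with g_x ∈ γ(G₀), g_1 = 1), and t : Π₀ → E₀ is chosen with d(t_x) = g_x, then h'(x,y) = t_x · θ_{u_x}(t_y) · h(x,y) · t_{xy}⁻¹ satisfies d(h'(x,y)) = u'_x u'_y (u'_{xy})⁻¹, and the 3-cocycle k' computed from (u', h') equals k. Hence the obstruction class [k] ∈ H³(Π₀, A) depends only on the data (α, γ, θ). -/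
/-- A change of the normalized section u to u' (with u'_x = g_x u_x,
g_x ∈ im d), followed by the new lift h'(x,y) = t_x · θ_{u_x}(t_y) · h(x,y) · t_{xy}⁻¹
where d(t_x) = g_x, leaves the obstruction cocycle k unchanged; hence
Obs(α,γ,θ) = [k] depends only on (α,γ,θ). -/
theorem stmt13 {E₀ G : Type*} [Group E₀] [Group G]
    (d : E₀ →* G) (θ : G →* MulAut E₀)
    (hC1 : ∀ e e' : E₀, θ (d e) e' = e * e' * e⁻¹)
    (hC2 : ∀ (g : G) (e : E₀), d (θ g e) = g * d e * g⁻¹)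
    (hcent : d.ker ≤ Subgroup.center E₀)
    [hN : d.range.Normal]
    -- the original section u, lift h, obstruction k
    (u : (G ⧸ d.range) → G)
    (hu : ∀ x, QuotientGroup.mk' d.range (u x) = x) (hu1 : u 1 = 1)
    (h : (G ⧸ d.range) → (G ⧸ d.range) → E₀)
    (hh : ∀ x y, d (h x y) = u x * u y * (u (x * y))⁻¹)
    (hhx1 : ∀ x, h x 1 = 1) (hh1y : ∀ y, h 1 y = 1)
    (k : (G ⧸ d.range) → (G ⧸ d.range) → (G ⧸ d.range) → E₀)
    (hk : ∀ x y z, θ (u x) (h y z) * h x (y * z) = h x y * h (x * y) z * k x y z)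
    -- another normalized section u', with u'_x = g_x · u_x, g_x ∈ im d lifted by t
    (u' : (G ⧸ d.range) → G)
    (hu' : ∀ x, QuotientGroup.mk' d.range (u' x) = x) (hu'1 : u' 1 = 1)
    (t : (G ⧸ d.range) → E₀)
    (ht : ∀ x, d (t x) = u' x * (u x)⁻¹) (ht1 : t 1 = 1)
    -- the new lift h'
    (h' : (G ⧸ d.range) → (G ⧸ d.range) → E₀)
    (hh'def : ∀ x y, h' x y = t x * θ (u x) (t y) * h x y * (t (x * y))⁻¹) :
    -- h' is a lift of the factor set of u', and the obstruction of (u',h') is k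
    (∀ x y, d (h' x y) = u' x * u' y * (u' (x * y))⁻¹) ∧
    (∀ x y z, θ (u' x) (h' y z) * h' x (y * z) = h' x y * h' (x * y) z * k x y z) := by

  constructor
  · intro x y
    simp only [hh'def, map_mul, map_inv, hC2, hh, ht]
    group
  · -- k lies in the kernel of d, hence is central
    have hdk : ∀ x y z, k x y z ∈ d.ker := by
      intro x y z
      have H := congrArg d (hk x y z)
      simp only [map_mul, hC2, hh] at H
      have H2 : d (k x y z) = _ := eq_inv_mul_iff_mul_eq.mpr H.symm
      rw [MonoidHom.mem_ker, H2, mul_assoc x y z]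
      group
    have hkc : ∀ x y z (a : E₀), a * k x y z = k x y z * a := fun x y z a =>
      Subgroup.mem_center_iff.mp (hcent (hdk x y z)) a
    have hu'd : ∀ w, u' w = d (t w) * u w := by
      intro w; rw [ht]; group
    have hconj : ∀ x y (e : E₀), θ (u x * u y) e = h x y * θ (u (x * y)) e * (h x y)⁻¹ := by
      intro x y e
      have huv : u x * u y = d (h x y) * u (x * y) := by rw [hh]; group
      rw [huv, map_mul, MulAut.mul_apply, hC1]
    intro x y z
    have e1 : θ (u' x) (h' y z) = t x * θ (u x) (h' y z) * (t x)⁻¹ := by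
      rw [hu'd, map_mul, MulAut.mul_apply, hC1]
    have e2 : h' y z * t (y * z) = t y * θ (u y) (t z) * h y z := by
      rw [hh'def]; group
    calc θ (u' x) (h' y z) * h' x (y * z)
        = (t x * θ (u x) (h' y z) * (t x)⁻¹) *
            (t x * θ (u x) (t (y * z)) * h x (y * z) * (t (x * (y * z)))⁻¹) := by
          rw [e1, hh'def x (y * z)]
      _ = t x * θ (u x) (h' y z * t (y * z)) * h x (y * z) * (t (x * (y * z)))⁻¹ := by
          rw [map_mul]; group
      _ = t x * θ (u x) (t y * θ (u y) (t z) * h y z) * h x (y * z) * (t (x * (y * z)))⁻¹ := by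
          rw [e2]
      _ = t x * θ (u x) (t y) * θ (u x * u y) (t z) *
            (θ (u x) (h y z) * h x (y * z)) * (t (x * (y * z)))⁻¹ := by
          rw [map_mul, map_mul, ← MulAut.mul_apply, ← map_mul]; group
      _ = t x * θ (u x) (t y) * (h x y * θ (u (x * y)) (t z) * (h x y)⁻¹) *
            (h x y * h (x * y) z * k x y z) * (t (x * (y * z)))⁻¹ := by
          rw [hconj, hk]
      _ = t x * θ (u x) (t y) * h x y * θ (u (x * y)) (t z) * h (x * y) z *
            ((t (x * y * z))⁻¹ * k x y z) := by
          rw [mul_assoc x y z, hkc x y z (t (x * (y * z)))⁻¹]; group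
      _ = h' x y * h' (x * y) z * k x y z := by
          rw [hh'def, hh'def]; group
end

section
/- Suppose a pre-prolongation (α, γ, θ) admits a covering (α,γ)-prolongation E (i.e., an extension 0 → A → B → G → 0 completing the diagram and inducing θ). Then the obstruction class Obs(α,γ,θ) = [k] vanishes in H³(Π₀, A). Concretely: one can choose a lift h : Π₀² → E₀ of the factor set f with φ(x)(h(y,z)) · h(x,yz) = h(x,y)·h(xy,z), i.e. k ≡ 1. -/
/-- If a pre-prolongation (α,γ,θ) admits a covering
(α,γ)-prolongation E, then the obstruction Obs(α,γ,θ) vanishes in H³(Π₀,A):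
one can choose a normalized lift h of the factor set f with
θ_{u_x}(h(y,z)) · h(x,yz) = h(x,y) · h(xy,z), i.e. k ≡ 1. -/
theorem stmt14 {A₀ B₀ G₀ A B G : Type*} [Group A₀] [Group B₀] [Group G₀]
    [Group A] [Group B] [Group G]
    -- the pre-prolongation data
    (j₀ : A₀ →* B₀) (p₀ : B₀ →* G₀) (α : A₀ →* A) (γ : G₀ →* G)
    (hj₀ : Function.Injective j₀) (hp₀ : Function.Surjective p₀)
    (hex₀ : j₀.range = p₀.ker)
    (hα : Function.Surjective α) (hγ : Function.Injective γ)
    [hN : γ.range.Normal] [hNα : (Subgroup.map j₀ α.ker).Normal]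
    (hcent : j₀.range ≤ Subgroup.center B₀)
    (π : (B₀ ⧸ Subgroup.map j₀ α.ker) →* G₀)
    (hπ : ∀ b₀ : B₀, π (QuotientGroup.mk b₀) = p₀ b₀)
    (θ : G →* MulAut (B₀ ⧸ Subgroup.map j₀ α.ker))
    (hC1 : ∀ e e' : B₀ ⧸ Subgroup.map j₀ α.ker, θ (γ (π e)) e' = e * e' * e⁻¹)
    (hC2 : ∀ (g : G) (e : B₀ ⧸ Subgroup.map j₀ α.ker),
      γ (π (θ g e)) = g * γ (π e) * g⁻¹)
    -- the covering (α,γ)-prolongation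
    (j : A →* B) (p : B →* G) (β : B₀ →* B)
    (hj : Function.Injective j) (hp : Function.Surjective p)
    (hex : j.range = p.ker)
    (hβj : β.comp j₀ = j.comp α) (hpβ : p.comp β = γ.comp p₀)
    (ε : (B₀ ⧸ Subgroup.map j₀ α.ker) →* B)
    (hεdef : ∀ b₀ : B₀, ε (QuotientGroup.mk b₀) = β b₀)
    (hε : Function.Injective ε)
    (hεrange : ε.range = ((QuotientGroup.mk' γ.range).comp p).ker)
    -- E induces θ
    (hθ : ∀ (b : B) (e₀ : B₀ ⧸ Subgroup.map j₀ α.ker),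
      ε (θ (p b) e₀) = b * ε e₀ * b⁻¹)
    -- a normalized section u of σ : G → Π₀
    (u : (G ⧸ γ.range) → G)
    (hu : ∀ x, QuotientGroup.mk' γ.range (u x) = x) (hu1 : u 1 = 1) :
    ∃ h : (G ⧸ γ.range) → (G ⧸ γ.range) → (B₀ ⧸ Subgroup.map j₀ α.ker),
      (∀ x y, γ (π (h x y)) = u x * u y * (u (x * y))⁻¹) ∧
      (∀ x, h x 1 = 1) ∧ (∀ y, h 1 y = 1) ∧
      (∀ x y z, θ (u x) (h y z) * h x (y * z) = h x y * h (x * y) z) := by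
  classical
  -- choose lifts v x ∈ B with p (v x) = u x, v 1 = 1
  set v : (G ⧸ γ.range) → B :=
    fun x => if x = 1 then 1 else (hp (u x)).choose with hv
  have hpv : ∀ x, p (v x) = u x := by
    intro x
    by_cases hx : x = 1
    · simp [hv, hx, hu1]
    · simp only [hv, if_neg hx]
      exact (hp (u x)).choose_spec
  have hv1 : v 1 = 1 := by simp [hv]
  -- p ∘ ε = γ ∘ π
  have hpε : ∀ e : B₀ ⧸ Subgroup.map j₀ α.ker, p (ε e) = γ (π e) := by
    intro e
    obtain ⟨b₀, rfl⟩ := QuotientGroup.mk_surjective e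
    rw [hεdef, hπ]
    exact congrFun (congrArg (·.toFun) hpβ) b₀
  -- the factor set lands in ε.range
  have hfmem : ∀ x y : G ⧸ γ.range, v x * v y * (v (x * y))⁻¹ ∈ ε.range := by
    intro x y
    rw [hεrange]
    simp only [MonoidHom.mem_ker, MonoidHom.comp_apply, map_mul, map_inv, hpv]
    simp [hu, mul_assoc]
  refine ⟨fun x y => (hfmem x y).choose, ?_, ?_, ?_, ?_⟩
  <;> have hspec : ∀ x y, ε ((hfmem x y).choose) = v x * v y * (v (x * y))⁻¹ :=
    fun x y => (hfmem x y).choose_spec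
  · intro x y
    rw [← hpε, hspec, map_mul, map_mul, map_inv, hpv, hpv, hpv]
  · intro x
    apply hε
    rw [hspec, map_one]
    simp [hv1]
  · intro y
    apply hε
    rw [hspec, map_one]
    simp [hv1]
  · intro x y z
    apply hε
    rw [map_mul, map_mul, hspec, hspec, hspec]
    have := hθ (v x) ((hfmem y z).choose)
    rw [hpv] at this
    rw [this, hspec]
    group
end

section
/- Let E : 0 → A → B → G → 0 be an (α,γ)-prolongation of E₀ inducing θ, with sections v_x ∈ B lifting u_x ∈ G (p(v_x) = u_x). Then the map β* : B → B_h = [E₀, φ, h, Π₀] defined by ε(e₀)·v_x ↦ (e₀, x) is a group isomorphism making E equivalent to the crossed product extension E_h, with β*∘β = β' (where β'(b₀) = (b₀·ker α, 1)). In particular, every (α,γ)-prolongation is equivalent to a crossed product extension. -/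
/-- The crossed product multiplication on E₀ × P with φ(x) = θ(u x):
(e₀,x)·(e₀',y) = (e₀ · φ(x)(e₀') · h(x,y), xy). -/
def crossedProductMul {E₀ G P : Type*} [Group E₀] [Group G] [Mul P]
    (θ : G →* MulAut E₀) (u : P → G) (h : P → P → E₀) :
    E₀ × P → E₀ × P → E₀ × P :=
  fun z w => (z.1 * θ (u z.2) w.1 * h z.2 w.2, z.2 * w.2)

/-- Any (α,γ)-prolongation E inducing θ, with sections v_x lifting
u_x, is equivalent to the crossed product extension E_h = [E₀, φ, h, Π₀] via the
isomorphism β* : B → B_h, ε(e₀)·v_x ↦ (e₀, x), which satisfies β*∘j = j',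
p'∘β* = p and β*∘β = β'. -/
theorem stmt18 {A₀ B₀ G₀ A B G : Type*} [Group A₀] [Group B₀] [Group G₀]
    [Group A] [Group B] [Group G]
    (j₀ : A₀ →* B₀) (p₀ : B₀ →* G₀) (j : A →* B) (p : B →* G)
    (α : A₀ →* A) (β : B₀ →* B) (γ : G₀ →* G)
    (hj₀ : Function.Injective j₀) (hp₀ : Function.Surjective p₀)
    (hex₀ : j₀.range = p₀.ker)
    (hj : Function.Injective j) (hp : Function.Surjective p)
    (hex : j.range = p.ker)
    (hα : Function.Surjective α) (hγ : Function.Injective γ)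
    [hN : γ.range.Normal] [hNα : (Subgroup.map j₀ α.ker).Normal]
    (hβj : β.comp j₀ = j.comp α) (hpβ : p.comp β = γ.comp p₀)
    (hcent : j₀.range ≤ Subgroup.center B₀)
    -- the maps i, π, ε of the induced diagram
    (i : A →* (B₀ ⧸ Subgroup.map j₀ α.ker))
    (hi : ∀ a₀ : A₀, i (α a₀) = QuotientGroup.mk (j₀ a₀))
    (π : (B₀ ⧸ Subgroup.map j₀ α.ker) →* G₀)
    (hπ : ∀ b₀ : B₀, π (QuotientGroup.mk b₀) = p₀ b₀)
    (ε : (B₀ ⧸ Subgroup.map j₀ α.ker) →* B)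
    (hεdef : ∀ b₀ : B₀, ε (QuotientGroup.mk b₀) = β b₀)
    (hε : Function.Injective ε)
    (hεrange : ε.range = ((QuotientGroup.mk' γ.range).comp p).ker)
    -- the induced θ
    (θ : G →* MulAut (B₀ ⧸ Subgroup.map j₀ α.ker))
    (hθ : ∀ (b : B) (e₀ : B₀ ⧸ Subgroup.map j₀ α.ker),
      ε (θ (p b) e₀) = b * ε e₀ * b⁻¹)
    -- sections u of σ and v of p over u, and the induced lift h
    (u : (G ⧸ γ.range) → G)
    (hu : ∀ x, QuotientGroup.mk' γ.range (u x) = x) (hu1 : u 1 = 1)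
    (v : (G ⧸ γ.range) → B)
    (hv : ∀ x, p (v x) = u x) (hv1 : v 1 = 1)
    (h : (G ⧸ γ.range) → (G ⧸ γ.range) → (B₀ ⧸ Subgroup.map j₀ α.ker))
    (hh : ∀ x y, ε (h x y) = v x * v y * (v (x * y))⁻¹) :
    ∃ βs : B → (B₀ ⧸ Subgroup.map j₀ α.ker) × (G ⧸ γ.range),
      Function.Bijective βs ∧
      (∀ (e₀ : B₀ ⧸ Subgroup.map j₀ α.ker) (x : G ⧸ γ.range),
        βs (ε e₀ * v x) = (e₀, x)) ∧
      (∀ b b' : B, βs (b * b') = crossedProductMul θ u h (βs b) (βs b')) ∧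
      (∀ a : A, βs (j a) = (i a, 1)) ∧
      (∀ b : B, γ (π (βs b).1) * u (βs b).2 = p b) ∧
      (∀ b₀ : B₀, βs (β b₀) = (QuotientGroup.mk b₀, 1)) := by
  
  classical
  set q : B →* G ⧸ γ.range := (QuotientGroup.mk' γ.range).comp p with hq
  have hqε : ∀ e, q (ε e) = 1 := by
    intro e
    have : ε e ∈ ((QuotientGroup.mk' γ.range).comp p).ker := by
      rw [← hεrange]; exact ⟨e, rfl⟩
    exact this
  have hqv : ∀ x, q (v x) = x := by
    intro x
    show QuotientGroup.mk' γ.range (p (v x)) = x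
    rw [hv, hu]
  have hpε : ∀ e, p (ε e) = γ (π e) := by
    intro e
    induction e using QuotientGroup.induction_on with
    | H b₀ => rw [hεdef, hπ]; exact DFunLike.congr_fun hpβ b₀
  have hεi : ∀ a, ε (i a) = j a := by
    intro a
    obtain ⟨a₀, rfl⟩ := hα a
    rw [hi, hεdef]
    exact DFunLike.congr_fun hβj a₀
  set βs : B → (B₀ ⧸ Subgroup.map j₀ α.ker) × (G ⧸ γ.range) :=
    fun b => (Function.invFun ε (b * (v (q b))⁻¹), q b) with hβs
  have hw : ∀ b : B, ε ((βs b).1) = b * (v (q b))⁻¹ := by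
    intro b
    have hmem : b * (v (q b))⁻¹ ∈ ε.range := by
      rw [hεrange]
      show q (b * (v (q b))⁻¹) = 1
      rw [map_mul, map_inv, hqv, mul_inv_cancel]
    obtain ⟨e, he⟩ := hmem
    exact Function.invFun_eq ⟨e, he⟩
  have hdecomp : ∀ b : B, b = ε ((βs b).1) * v ((βs b).2) := by
    intro b
    rw [hw]; simp [hβs]
  have hkey : ∀ (e₀ : B₀ ⧸ Subgroup.map j₀ α.ker) (x : G ⧸ γ.range),
      βs (ε e₀ * v x) = (e₀, x) := by
    intro e₀ x
    have hq2 : q (ε e₀ * v x) = x := by rw [map_mul, hqε, hqv, one_mul]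
    simp only [hβs]
    rw [hq2, mul_inv_cancel_right, Function.leftInverse_invFun hε e₀]
  have hmul : ∀ e x e' y, βs ((ε e * v x) * (ε e' * v y)) =
      crossedProductMul θ u h (e, x) (e', y) := by
    intro e x e' y
    have hθv : ε (θ (u x) e') = v x * ε e' * (v x)⁻¹ := by rw [← hv, hθ]
    have h1 : (ε e * v x) * (ε e' * v y) = ε (e * θ (u x) e' * h x y) * v (x * y) := by
      rw [map_mul, map_mul, hθv, hh]; group
    rw [h1, hkey]; rfl
  refine ⟨βs, ⟨?_, ?_⟩, hkey, ?_, ?_, ?_, ?_⟩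
  · intro b b' hbb
    rw [hdecomp b, hdecomp b', hbb]
  · rintro ⟨e₀, x⟩
    exact ⟨ε e₀ * v x, hkey e₀ x⟩
  · intro b b'
    calc βs (b * b')
        = βs ((ε (βs b).1 * v (βs b).2) * (ε (βs b').1 * v (βs b').2)) := by
          rw [← hdecomp, ← hdecomp]
      _ = crossedProductMul θ u h ((βs b).1, (βs b).2) ((βs b').1, (βs b').2) :=
          hmul _ _ _ _
      _ = crossedProductMul θ u h (βs b) (βs b') := rfl
  · intro a
    have h1 : j a = ε (i a) * v 1 := by rw [hεi, hv1, mul_one]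
    rw [h1, hkey]
  · intro b
    conv_rhs => rw [hdecomp b]
    rw [map_mul, hpε, hv]
  · intro b₀
    have h1 : β b₀ = ε (QuotientGroup.mk b₀) * v 1 := by
      rw [hεdef, hv1, mul_one]
    rw [h1, hkey]
end

section
/- If a central extension E₀ admits an (α,γ)-prolongation, then the set Ext_{(α,γ)}(G,A) of equivalence classes of (α,γ)-prolongations of E₀ is a torsor under H²(Π₀, A): the action ω(τ̄)(cls[E₀,φ,h,Π₀]) = cls[E₀,φ,h·τ,Π₀] is well-defined, and for any two classes of prolongations there is a unique τ̄ ∈ H²(Π₀,A) taking one to the other. -/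
section SchreierTheory

variable {E₀ G : Type*} [Group E₀] [Group G]

/-- `h` is a normalized lift along `d` of the factor set of the section `u`
satisfying the 2-cocycle identity, i.e. the data of a crossed product
extension [E₀, φ, h, Π₀] which is an (α,γ)-prolongation. -/
def IsProlongationDatum (d : E₀ →* G) (θ : G →* MulAut E₀) [d.range.Normal]
    (u : (G ⧸ d.range) → G) (h : (G ⧸ d.range) → (G ⧸ d.range) → E₀) : Prop :=
  (∀ x y, d (h x y) = u x * u y * (u (x * y))⁻¹) ∧
  (∀ x, h x 1 = 1) ∧ (∀ y, h 1 y = 1) ∧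
  (∀ x y z, θ (u x) (h y z) * h x (y * z) = h x y * h (x * y) z)

/-- A normalized 2-cocycle of Π₀ with values in A = ker d (with Π₀-action via θ
through the section u). -/
def IsTwoCocycle (d : E₀ →* G) (θ : G →* MulAut E₀) [d.range.Normal]
    (u : (G ⧸ d.range) → G) (τ : (G ⧸ d.range) → (G ⧸ d.range) → E₀) : Prop :=
  (∀ x y, τ x y ∈ d.ker) ∧ (∀ x, τ x 1 = 1) ∧ (∀ y, τ 1 y = 1) ∧
  (∀ x y z, θ (u x) (τ y z) * τ x (y * z) = τ x y * τ (x * y) z)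

/-- A 2-coboundary of Π₀ with values in A = ker d. -/
def IsTwoCoboundary (d : E₀ →* G) (θ : G →* MulAut E₀) [d.range.Normal]
    (u : (G ⧸ d.range) → G) (τ : (G ⧸ d.range) → (G ⧸ d.range) → E₀) : Prop :=
  ∃ t : (G ⧸ d.range) → E₀, (∀ x, t x ∈ d.ker) ∧ t 1 = 1 ∧
    ∀ x y, τ x y = t x * θ (u x) (t y) * (t (x * y))⁻¹

/-- Equivalence of the crossed product extensions [E₀, φ, h, Π₀] and
[E₀, φ, h', Π₀]: h and h' differ by a coboundary δt with values in A = ker d. -/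
def EquivDatum (d : E₀ →* G) (θ : G →* MulAut E₀) [d.range.Normal]
    (u : (G ⧸ d.range) → G) (h h' : (G ⧸ d.range) → (G ⧸ d.range) → E₀) : Prop :=
  ∃ t : (G ⧸ d.range) → E₀, (∀ x, t x ∈ d.ker) ∧ t 1 = 1 ∧
    ∀ x y, h' x y = t x * θ (u x) (t y) * h x y * (t (x * y))⁻¹

set_option linter.unusedVariables false

private lemma key' {M : Type*} [Group M] (a b p q : M) (hb : b * p = p * b) :
    a * b * (p * q) = a * p * (b * q) := by
  rw [mul_assoc a b, ← mul_assoc b p q, hb, mul_assoc p b q, ← mul_assoc]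

private lemma shuffle2 {M : Type*} [Group M] (H A B C T : M)
    (hA : ∀ z, A * z = z * A) (hB : ∀ z, B * z = z * B)
    (hC : ∀ z, C * z = z * C) (hT : ∀ z, T * z = z * T) :
    H * (C * B * A * T) = A * B * (H * T) * C := by
  have h1 : C * B * A * T = A * (B * T) * C := by
    rw [hC B, mul_assoc B C A, hC A, ← mul_assoc B A C, hB A, mul_assoc (A*B) C T, hC T,
      mul_assoc A B (T*C), ← mul_assoc B T C, ← mul_assoc A (B*T) C]
  rw [h1, ← mul_assoc H (A*(B*T)) C, ← mul_assoc H A (B*T), ← hA H, mul_assoc A H (B*T),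
    ← mul_assoc H B T, ← hB H, mul_assoc B H T, ← mul_assoc A B (H*T)]

private lemma shuffle3 {M : Type*} [Group M] (H A B C T : M)
    (hA : ∀ z, A * z = z * A) (hB : ∀ z, B * z = z * B)
    (hC : ∀ z, C * z = z * C) (hT : ∀ z, T * z = z * T) :
    H⁻¹ * (A * B * (H * T) * C⁻¹) * T⁻¹ = A * B * C⁻¹ := by
  have hAB : ∀ z, (A * B) * z = z * (A * B) := fun z => by
    rw [mul_assoc, hB z, ← mul_assoc, hA z, mul_assoc]
  have h1 : A * B * (H * T) * C⁻¹ = H * (A * B * T * C⁻¹) := by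
    rw [← mul_assoc (A*B) H T, hAB H, mul_assoc H (A*B) T, mul_assoc H ((A*B)*T) C⁻¹]
  rw [h1, ← mul_assoc H⁻¹ H _, inv_mul_cancel, one_mul,
    mul_assoc (A*B) T C⁻¹, hT C⁻¹, ← mul_assoc (A*B) C⁻¹ T, mul_assoc ((A*B)*C⁻¹) T T⁻¹,
    mul_inv_cancel, mul_one]

/-- Schreier theory for (α,γ)-prolongations: if E₀ admits an
(α,γ)-prolongation, then the set of equivalence classes of
(α,γ)-prolongations — each represented by a crossed product [E₀,φ,h,Π₀] — is a
torsor under H²(Π₀,A): the action cls h ↦ cls (h·τ) by a 2-cocycle τ is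
well-defined (compatible with replacing τ by a cohomologous cocycle), and for
any two prolongation data there is a 2-cocycle τ, unique up to a coboundary,
taking one class to the other. -/
theorem stmt19 (d : E₀ →* G) (θ : G →* MulAut E₀)
    (hC1 : ∀ e e' : E₀, θ (d e) e' = e * e' * e⁻¹)
    (hC2 : ∀ (g : G) (e : E₀), d (θ g e) = g * d e * g⁻¹)
    (hcent : d.ker ≤ Subgroup.center E₀)
    [hN : d.range.Normal]
    (u : (G ⧸ d.range) → G)
    (hu : ∀ x, QuotientGroup.mk' d.range (u x) = x) (hu1 : u 1 = 1)
    -- E₀ admits an (α,γ)-prolongation: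
    (hexists : ∃ h, IsProlongationDatum d θ u h) :
    -- (i) the action of 2-cocycles on prolongation data is defined:
    (∀ h τ, IsProlongationDatum d θ u h → IsTwoCocycle d θ u τ →
      IsProlongationDatum d θ u (fun x y => h x y * τ x y)) ∧
    -- (ii) it is well-defined on classes: cohomologous cocycles give
    -- equivalent prolongations
    (∀ h τ τ', IsProlongationDatum d θ u h → IsTwoCocycle d θ u τ →
      IsTwoCocycle d θ u τ' →
      IsTwoCoboundary d θ u (fun x y => τ x y * (τ' x y)⁻¹) →
      EquivDatum d θ u (fun x y => h x y * τ x y) (fun x y => h x y * τ' x y)) ∧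
    -- (iii) simple transitivity: for any two prolongation data there is a
    -- 2-cocycle τ, unique up to coboundary, carrying one to the other
    (∀ h h', IsProlongationDatum d θ u h → IsProlongationDatum d θ u h' →
      ∃ τ, IsTwoCocycle d θ u τ ∧
        EquivDatum d θ u (fun x y => h x y * τ x y) h' ∧
        ∀ τ', IsTwoCocycle d θ u τ' →
          EquivDatum d θ u (fun x y => h x y * τ' x y) h' →
          IsTwoCoboundary d θ u (fun x y => τ x y * (τ' x y)⁻¹)) := by
  have cen : ∀ a : E₀, d a = 1 → ∀ z : E₀, a * z = z * a := fun a ha z =>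
    (Subgroup.mem_center_iff.mp (hcent (MonoidHom.mem_ker.mpr ha)) z).symm
  have dθ : ∀ (g : G) (a : E₀), d a = 1 → d (θ g a) = 1 := fun g a ha => by
    rw [hC2, ha]; group
  refine ⟨?_, ?_, ?_⟩
  · -- (i)
    rintro h τ ⟨hd, hr, hl, hco⟩ ⟨tk, tr, tl, tco⟩
    refine ⟨fun x y => ?_, fun x => ?_, fun y => ?_, fun x y z => ?_⟩
    · show d (h x y * τ x y) = _
      rw [map_mul, hd, MonoidHom.mem_ker.mp (tk x y), mul_one]
    · show h x 1 * τ x 1 = 1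
      rw [hr, tr, mul_one]
    · show h 1 y * τ 1 y = 1
      rw [hl, tl, mul_one]
    · show θ (u x) (h y z * τ y z) * (h x (y * z) * τ x (y * z)) =
        h x y * τ x y * (h (x * y) z * τ (x * y) z)
      rw [map_mul,
        key' (θ (u x) (h y z)) (θ (u x) (τ y z)) (h x (y * z)) (τ x (y * z))
          (cen _ (dθ _ _ (MonoidHom.mem_ker.mp (tk y z))) _),
        key' (h x y) (τ x y) (h (x * y) z) (τ (x * y) z)
          (cen _ (MonoidHom.mem_ker.mp (tk x y)) _),
        hco, tco]
  · -- (ii)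
    rintro h τ τ' ⟨hd, hr, hl, hco⟩ ⟨τk, _, _, _⟩ ⟨τk', _, _, _⟩ ⟨t, tk, t10, te⟩
    have te' : ∀ x y, τ x y * (τ' x y)⁻¹ = t x * θ (u x) (t y) * (t (x * y))⁻¹ := te
    refine ⟨fun x => (t x)⁻¹, fun x => inv_mem (tk x), by show (t 1)⁻¹ = 1; rw [t10, inv_one],
      fun x y => ?_⟩
    show h x y * τ' x y =
      (t x)⁻¹ * θ (u x) ((t y)⁻¹) * (h x y * τ x y) * ((t (x * y))⁻¹)⁻¹
    have hτeq : τ' x y = t (x * y) * ((θ (u x) (t y))⁻¹ * (t x)⁻¹) * τ x y := by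
      have e : τ' x y = (t x * θ (u x) (t y) * (t (x * y))⁻¹)⁻¹ * τ x y := by
        rw [← te' x y]; group
      rw [e, mul_inv_rev, mul_inv_rev, inv_inv]
    rw [hτeq, map_inv, inv_inv, ← mul_assoc (t (x * y)) _ _]
    exact shuffle2 (h x y) ((t x)⁻¹) ((θ (u x) (t y))⁻¹) (t (x * y)) (τ x y)
      (cen _ (by rw [map_inv, MonoidHom.mem_ker.mp (tk x), inv_one]))
      (cen _ (by rw [map_inv, dθ _ _ (MonoidHom.mem_ker.mp (tk y)), inv_one]))
      (cen _ (MonoidHom.mem_ker.mp (tk (x * y))))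
      (cen _ (MonoidHom.mem_ker.mp (τk x y)))
  · -- (iii)
    rintro h h' ⟨hd, hr, hl, hco⟩ ⟨hd', hr', hl', hco'⟩
    have τker : ∀ x y, (h x y)⁻¹ * h' x y ∈ d.ker := fun x y =>
      MonoidHom.mem_ker.mpr (by rw [map_mul, map_inv, hd, hd']; group)
    have hmul : ∀ x y, h x y * ((h x y)⁻¹ * h' x y) = h' x y := fun x y => by group
    refine ⟨fun x y => (h x y)⁻¹ * h' x y,
      ⟨τker, fun x => ?_, fun y => ?_, fun x y z => ?_⟩,
      ⟨fun _ => 1, fun _ => one_mem _, rfl, fun x y => ?_⟩,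
      fun τ' ⟨τk', _, _, _⟩ heq => ?_⟩
    · show (h x 1)⁻¹ * h' x 1 = 1
      rw [hr, hr']; simp
    · show (h 1 y)⁻¹ * h' 1 y = 1
      rw [hl, hl']; simp
    · show θ (u x) ((h y z)⁻¹ * h' y z) * ((h x (y * z))⁻¹ * h' x (y * z)) =
        ((h x y)⁻¹ * h' x y) * ((h (x * y) z)⁻¹ * h' (x * y) z)
      have cθτ : θ (u x) ((h y z)⁻¹ * h' y z) * h x (y * z) =
          h x (y * z) * θ (u x) ((h y z)⁻¹ * h' y z) :=
        cen _ (dθ _ _ (MonoidHom.mem_ker.mp (τker y z))) _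
      have cτh : ((h x y)⁻¹ * h' x y) * h (x * y) z =
          h (x * y) z * ((h x y)⁻¹ * h' x y) :=
        cen _ (MonoidHom.mem_ker.mp (τker x y)) _
      have E : (h x y * h (x * y) z) *
            (θ (u x) ((h y z)⁻¹ * h' y z) * ((h x (y * z))⁻¹ * h' x (y * z))) =
          (h x y * h (x * y) z) *
            (((h x y)⁻¹ * h' x y) * ((h (x * y) z)⁻¹ * h' (x * y) z)) := by
        calc (h x y * h (x * y) z) *
              (θ (u x) ((h y z)⁻¹ * h' y z) * ((h x (y * z))⁻¹ * h' x (y * z)))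
            = (θ (u x) (h y z) * h x (y * z)) *
              (θ (u x) ((h y z)⁻¹ * h' y z) * ((h x (y * z))⁻¹ * h' x (y * z))) := by
              rw [hco]
          _ = θ (u x) (h y z) * θ (u x) ((h y z)⁻¹ * h' y z) *
              (h x (y * z) * ((h x (y * z))⁻¹ * h' x (y * z))) :=
              (key' _ _ _ _ cθτ).symm
          _ = θ (u x) (h y z * ((h y z)⁻¹ * h' y z)) *
              (h x (y * z) * ((h x (y * z))⁻¹ * h' x (y * z))) := by rw [← map_mul]
          _ = θ (u x) (h' y z) * h' x (y * z) := by rw [hmul, hmul]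
          _ = h' x y * h' (x * y) z := hco' x y z
          _ = (h x y * ((h x y)⁻¹ * h' x y)) *
              (h (x * y) z * ((h (x * y) z)⁻¹ * h' (x * y) z)) := by
              rw [hmul x y, hmul (x * y) z]
          _ = (h x y * h (x * y) z) *
              (((h x y)⁻¹ * h' x y) * ((h (x * y) z)⁻¹ * h' (x * y) z)) :=
              key' _ _ _ _ cτh
      exact mul_left_cancel E
    · show h' x y = 1 * θ (u x) 1 * (h x y * ((h x y)⁻¹ * h' x y)) * 1⁻¹
      simp
    · obtain ⟨t, tk, t10, te⟩ := heq
      have te' : ∀ x y, h' x y =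
          t x * θ (u x) (t y) * (h x y * τ' x y) * (t (x * y))⁻¹ := te
      refine ⟨t, tk, t10, fun x y => ?_⟩
      show ((h x y)⁻¹ * h' x y) * (τ' x y)⁻¹ = t x * θ (u x) (t y) * (t (x * y))⁻¹
      rw [te' x y]
      exact shuffle3 (h x y) (t x) (θ (u x) (t y)) (t (x * y)) (τ' x y)
        (cen _ (MonoidHom.mem_ker.mp (tk x)))
        (cen _ (dθ _ _ (MonoidHom.mem_ker.mp (tk y))))
        (cen _ (MonoidHom.mem_ker.mp (tk (x * y))))
        (cen _ (MonoidHom.mem_ker.mp (τk' x y)))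


end SchreierTheory
end
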